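/- Under the hypotheses of the null-plane characteristic problem (2R_u = P_x + Q_y + R_z, P_z = R_x, Q_z = R_y, C³ fields periodic in x,y), the derived identity ∫_{u+z=T}(2R_x² + 2R_y² + R_z² + P_x² + Q_x² + P_y² + Q_y²) dΣ_T = 2∫_{Σ_u}(R_x² + R_y² + R_z²) dΣ_u + ∫_{Σ_z}(−R_z² + P_x² + Q_x² + P_y² + Q_y²) dΣ_z holds, and consequently ∫_{Σ_T}(R_x² + R_y² + R_z² + P_x² + Q_x² + P_y² + Q_y²) dΣ_T ≤ 2(∫_{Σ_u}(R_x²+R_y²+R_z²) dΣ_u + ∫_{Σ_z}(P_x²+Q_x²+P_y²+Q_y²) dΣ_z). -/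

import Mathlib

/-- Partial derivative in the `a`-th coordinate direction of `ℝ⁴`. -/
noncomputable def pd (a : Fin 4) (f : (Fin 4 → ℝ) → ℝ) (x : Fin 4 → ℝ) : ℝ :=
  fderiv ℝ f x (Pi.single a 1)

open MeasureTheory intervalIntegral Set Function

section Toolkit

abbrev V4 := Fin 4 → ℝ

variable {f g : V4 → ℝ} {p : V4} {a : Fin 4}

lemma contDiff_pd {n m : WithTop ℕ∞} (a : Fin 4) (hf : ContDiff ℝ n f) (h : m + 1 ≤ n) :
    ContDiff ℝ m (pd a f) :=
  (ContinuousLinearMap.apply ℝ ℝ (Pi.single a 1 : V4)).contDiff.comp (hf.fderiv_right h)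

lemma contDiff_pd3 (a : Fin 4) (hf : ContDiff ℝ 3 f) : ContDiff ℝ 2 (pd a f) :=
  contDiff_pd a hf (by norm_num)

lemma continuous_pd (a : Fin 4) (hf : ContDiff ℝ 1 f) : Continuous (pd a f) :=
  (contDiff_pd a hf (by norm_num) : ContDiff ℝ 0 (pd a f)).continuous

lemma pd_of_hasFDerivAt {L : V4 →L[ℝ] ℝ} (h : HasFDerivAt f L p) :
    pd a f p = L (Pi.single a 1) := by rw [pd, h.fderiv]

lemma pd_pd_comm (hf : ContDiff ℝ 2 f) (a b : Fin 4) (p : V4) :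
    pd a (pd b f) p = pd b (pd a f) p := by
  have hdf : Differentiable ℝ f := hf.differentiable (by norm_num)
  have hd2 : DifferentiableAt ℝ (fderiv ℝ f) p :=
    ((hf.fderiv_right (by norm_num : (1:WithTop ℕ∞) + 1 ≤ 2)).differentiable
      (by norm_num)).differentiableAt
  have hD := hd2.hasFDerivAt
  have hev : ∀ w : Fin 4, HasFDerivAt (pd w f)
      ((ContinuousLinearMap.apply ℝ ℝ (Pi.single w 1 : V4)).comp (fderiv ℝ (fderiv ℝ f) p)) p :=
    fun w => (ContinuousLinearMap.apply ℝ ℝ (Pi.single w 1 : V4)).hasFDerivAt.comp p hD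
  have e1 : pd a (pd b f) p = fderiv ℝ (fderiv ℝ f) p (Pi.single a 1) (Pi.single b 1) :=
    pd_of_hasFDerivAt (hev b)
  have e2 : pd b (pd a f) p = fderiv ℝ (fderiv ℝ f) p (Pi.single b 1) (Pi.single a 1) :=
    pd_of_hasFDerivAt (hev a)
  rw [e1, e2]
  exact second_derivative_symmetric (fun y => (hdf y).hasFDerivAt) hD _ _

lemma pd_fun_mul (hf : DifferentiableAt ℝ f p) (hg : DifferentiableAt ℝ g p) (a : Fin 4) :
    pd a (fun q => f q * g q) p = pd a f p * g p + f p * pd a g p := by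
  rw [pd, fderiv_fun_mul hf hg]; simp [pd]; ring

lemma pd_fun_sq (hf : DifferentiableAt ℝ f p) (a : Fin 4) :
    pd a (fun q => f q ^ 2) p = 2 * f p * pd a f p := by
  have : (fun q => f q ^ 2) = fun q => f q * f q := by funext q; ring
  rw [this, pd_fun_mul hf hf]; ring

lemma pd_fun_add (hf : DifferentiableAt ℝ f p) (hg : DifferentiableAt ℝ g p) (a : Fin 4) :
    pd a (fun q => f q + g q) p = pd a f p + pd a g p := by
  rw [pd, fderiv_fun_add hf hg]; simp [pd]

lemma pd_fun_neg (a : Fin 4) : pd a (fun q => -f q) p = -pd a f p := by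
  rw [pd, fderiv_fun_neg]; simp [pd]

lemma pd_fun_const_mul (hf : DifferentiableAt ℝ f p) (c : ℝ) (a : Fin 4) :
    pd a (fun q => c * f q) p = c * pd a f p := by
  rw [pd, fderiv_const_mul hf]; simp [pd]

lemma hasDerivAt_line (f : V4 → ℝ) (c v : V4) (s : ℝ) (hf : DifferentiableAt ℝ f (c + s • v)) :
    HasDerivAt (fun t : ℝ => f (c + t • v)) (fderiv ℝ f (c + s • v) v) s := by
  have hp : HasDerivAt (fun t : ℝ => c + t • v) v s := by
    simpa using ((hasDerivAt_id s).smul_const v).const_add c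
  exact hf.hasFDerivAt.comp_hasDerivAt s hp

lemma vec0 (u z x y : ℝ) : (![u, z, x, y] : V4) = ![0, z, x, y] + u • (Pi.single 0 1 : V4) := by
  funext i; fin_cases i <;> simp [Pi.single_apply]
lemma vec1 (u z x y : ℝ) : (![u, z, x, y] : V4) = ![u, 0, x, y] + z • (Pi.single 1 1 : V4) := by
  funext i; fin_cases i <;> simp [Pi.single_apply]
lemma vec2 (u z x y : ℝ) : (![u, z, x, y] : V4) = ![u, z, 0, y] + x • (Pi.single 2 1 : V4) := by
  funext i; fin_cases i <;> simp [Pi.single_apply]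
lemma vec3 (u z x y : ℝ) : (![u, z, x, y] : V4) = ![u, z, x, 0] + y • (Pi.single 3 1 : V4) := by
  funext i; fin_cases i <;> simp [Pi.single_apply]

lemma hd_slot0 {s z x y : ℝ} (hf : DifferentiableAt ℝ f ![s, z, x, y]) :
    HasDerivAt (fun u => f ![u, z, x, y]) (pd 0 f ![s, z, x, y]) s := by
  have h := hasDerivAt_line f ![0, z, x, y] (Pi.single 0 1) s (by rw [← vec0]; exact hf)
  simp only [← vec0] at h; exact h
lemma hd_slot1 {u s x y : ℝ} (hf : DifferentiableAt ℝ f ![u, s, x, y]) :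
    HasDerivAt (fun z => f ![u, z, x, y]) (pd 1 f ![u, s, x, y]) s := by
  have h := hasDerivAt_line f ![u, 0, x, y] (Pi.single 1 1) s (by rw [← vec1]; exact hf)
  simp only [← vec1] at h; exact h
lemma hd_slot2 {u z s y : ℝ} (hf : DifferentiableAt ℝ f ![u, z, s, y]) :
    HasDerivAt (fun x => f ![u, z, x, y]) (pd 2 f ![u, z, s, y]) s := by
  have h := hasDerivAt_line f ![u, z, 0, y] (Pi.single 2 1) s (by rw [← vec2]; exact hf)
  simp only [← vec2] at h; exact h
lemma hd_slot3 {u z x s : ℝ} (hf : DifferentiableAt ℝ f ![u, z, x, s]) :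
    HasDerivAt (fun y => f ![u, z, x, y]) (pd 3 f ![u, z, x, s]) s := by
  have h := hasDerivAt_line f ![u, z, x, 0] (Pi.single 3 1) s (by rw [← vec3]; exact hf)
  simp only [← vec3] at h; exact h

lemma update_eq_add (p : V4) (i : Fin 4) : Function.update p i (p i + 1) = p + Pi.single i 1 := by
  funext j
  rcases eq_or_ne j i with h | h
  · subst h; simp
  · simp [Function.update_of_ne h, Pi.single_eq_of_ne h]

lemma pd_periodic {i : Fin 4} (hf : Differentiable ℝ f)
    (hper : ∀ p : V4, f (p + Pi.single i 1) = f p) (a : Fin 4) (p : V4) :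
    pd a f (p + Pi.single i 1) = pd a f p := by
  have h1 : HasFDerivAt (fun q : V4 => f (q + Pi.single i 1))
      (fderiv ℝ f (p + Pi.single i 1)) p := by
    have := (hf (p + Pi.single i 1)).hasFDerivAt.comp p
      ((hasFDerivAt_id p).add_const (Pi.single i 1 : V4))
    simpa [Function.comp_def] using this
  have h2 : (fun q : V4 => f (q + Pi.single i 1)) = f := funext hper
  rw [h2] at h1
  have h3 := h1.fderiv
  simp only [pd, h3]

lemma cont_vec {α : Type*} [TopologicalSpace α] {a b c d : α → ℝ}
    (ha : Continuous a) (hb : Continuous b) (hc : Continuous c) (hd : Continuous d) :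
    Continuous fun q => (![a q, b q, c q, d q] : V4) := by
  apply continuous_pi; intro i; fin_cases i <;> simpa

lemma cont_comp4 {α : Type*} [TopologicalSpace α] {f : V4 → ℝ} (hf : Continuous f)
    {a b c d : α → ℝ} (ha : Continuous a) (hb : Continuous b) (hc : Continuous c)
    (hd : Continuous d) : Continuous fun q => f ![a q, b q, c q, d q] :=
  hf.comp (cont_vec ha hb hc hd)

noncomputable def II (f : V4 → ℝ) (u z : ℝ) : ℝ :=
  ∫ x in (0:ℝ)..1, ∫ y in (0:ℝ)..1, f ![u, z, x, y]

lemma cont_inner3 {f : V4 → ℝ} (hf : Continuous f) :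
    Continuous fun w : ℝ × ℝ × ℝ => ∫ y in (0:ℝ)..1, f ![w.1, w.2.1, w.2.2, y] := by
  apply intervalIntegral.continuous_parametric_intervalIntegral_of_continuous'
  exact cont_comp4 hf (by fun_prop) (by fun_prop) (by fun_prop) (by fun_prop)

lemma cont_II {f : V4 → ℝ} (hf : Continuous f) :
    Continuous fun q : ℝ × ℝ => II f q.1 q.2 := by
  apply intervalIntegral.continuous_parametric_intervalIntegral_of_continuous'
    (f := fun (q : ℝ × ℝ) (x : ℝ) => ∫ y in (0:ℝ)..1, f ![q.1, q.2, x, y])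
  exact (cont_inner3 hf).comp
    (by fun_prop : Continuous fun w : (ℝ × ℝ) × ℝ => (w.1.1, w.1.2, w.2))

lemma intg_y {f : V4 → ℝ} (hf : Continuous f) (u z x : ℝ) (a b : ℝ) :
    IntervalIntegrable (fun y => f ![u, z, x, y]) volume a b :=
  (cont_comp4 hf continuous_const continuous_const continuous_const continuous_id
    ).intervalIntegrable a b

lemma intg_x {f : V4 → ℝ} (hf : Continuous f) (u z : ℝ) (a b : ℝ) :
    IntervalIntegrable (fun x => ∫ y in (0:ℝ)..1, f ![u, z, x, y]) volume a b :=
  ((cont_inner3 hf).comp (by fun_prop : Continuous fun x : ℝ => (u, z, x))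
    ).intervalIntegrable a b

lemma II_add {f g : V4 → ℝ} (hf : Continuous f) (hg : Continuous g) (u z : ℝ) :
    II (fun p => f p + g p) u z = II f u z + II g u z := by
  unfold II
  calc (∫ x in (0:ℝ)..1, ∫ y in (0:ℝ)..1, (fun p => f p + g p) ![u, z, x, y])
      = ∫ x in (0:ℝ)..1,
          ((∫ y in (0:ℝ)..1, f ![u, z, x, y]) + ∫ y in (0:ℝ)..1, g ![u, z, x, y]) :=
        intervalIntegral.integral_congr fun x _ =>
          intervalIntegral.integral_add (intg_y hf u z x 0 1) (intg_y hg u z x 0 1)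
    _ = _ := intervalIntegral.integral_add (intg_x hf u z 0 1) (intg_x hg u z 0 1)

lemma II_neg {f : V4 → ℝ} (u z : ℝ) :
    II (fun p => -f p) u z = -II f u z := by
  unfold II
  calc (∫ x in (0:ℝ)..1, ∫ y in (0:ℝ)..1, (fun p => -f p) ![u, z, x, y])
      = ∫ x in (0:ℝ)..1, -∫ y in (0:ℝ)..1, f ![u, z, x, y] :=
        intervalIntegral.integral_congr fun x _ => intervalIntegral.integral_neg
    _ = _ := intervalIntegral.integral_neg

lemma II_const_mul {f : V4 → ℝ} (c : ℝ) (u z : ℝ) :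
    II (fun p => c * f p) u z = c * II f u z := by
  unfold II
  calc (∫ x in (0:ℝ)..1, ∫ y in (0:ℝ)..1, (fun p => c * f p) ![u, z, x, y])
      = ∫ x in (0:ℝ)..1, c * ∫ y in (0:ℝ)..1, f ![u, z, x, y] :=
        intervalIntegral.integral_congr fun x _ => intervalIntegral.integral_const_mul c _
    _ = _ := intervalIntegral.integral_const_mul c _

lemma II_congr {f g : V4 → ℝ} (h : ∀ p, f p = g p) (u z : ℝ) : II f u z = II g u z := by
  unfold II; exact intervalIntegral.integral_congr fun x _ =>
    intervalIntegral.integral_congr fun y _ => h _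

lemma II_nonneg {f : V4 → ℝ} (h : ∀ p, 0 ≤ f p) (u z : ℝ) : 0 ≤ II f u z := by
  unfold II
  apply intervalIntegral.integral_nonneg zero_le_one
  intro x _
  exact intervalIntegral.integral_nonneg zero_le_one fun y _ => h _

lemma swap_rect {F : ℝ → ℝ → ℝ} (hF : Continuous (Function.uncurry F)) {a b : ℝ}
    (ha : 0 ≤ a) (hb : 0 ≤ b) :
    ∫ s in (0:ℝ)..a, ∫ t in (0:ℝ)..b, F s t = ∫ t in (0:ℝ)..b, ∫ s in (0:ℝ)..a, F s t := by
  have hint : Integrable (Function.uncurry F)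
      ((volume.restrict (Ioc 0 a)).prod (volume.restrict (Ioc 0 b))) := by
    rw [Measure.prod_restrict]
    exact (hF.continuousOn.integrableOn_compact (isCompact_Icc.prod isCompact_Icc)).mono_set
      (Set.prod_mono Ioc_subset_Icc_self Ioc_subset_Icc_self)
  have h := MeasureTheory.integral_integral_swap hint
  simp only [intervalIntegral.integral_of_le ha, intervalIntegral.integral_of_le hb]
  exact h

lemma tri_slice {G : ℝ → ℝ → ℝ} (hG : Continuous (Function.uncurry G)) {T : ℝ}
    {z : ℝ} (hz : z ∈ Ioc (0:ℝ) T) :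
    ∫ u in (0:ℝ)..(T - z), G u z
      = ∫ u in Ioc (0:ℝ) T, ({p : ℝ × ℝ | p.1 + p.2 ≤ T}.indicator
          (Function.uncurry G)) (u, z) := by
  have h1 : ∀ u : ℝ, ({p : ℝ × ℝ | p.1 + p.2 ≤ T}.indicator (Function.uncurry G)) (u, z)
      = (Iic (T - z)).indicator (fun u => G u z) u := by
    intro u
    simp only [Set.indicator_apply, Set.mem_setOf_eq, Set.mem_Iic, Function.uncurry]
    by_cases h : u + z ≤ T
    · rw [if_pos h, if_pos (by linarith)]
    · rw [if_neg h, if_neg (by intro hc; exact h (by linarith))]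
  simp only [h1]
  rw [MeasureTheory.setIntegral_indicator measurableSet_Iic]
  have hset : Ioc (0:ℝ) T ∩ Iic (T - z) = Ioc 0 (T - z) := by
    ext u; simp only [Set.mem_inter_iff, Set.mem_Ioc, Set.mem_Iic]
    constructor
    · rintro ⟨⟨h1', _⟩, h2'⟩; exact ⟨h1', h2'⟩
    · rintro ⟨h1', h2'⟩; exact ⟨⟨h1', by linarith [hz.2, hz.1]⟩, h2'⟩
  rw [hset, intervalIntegral.integral_of_le (by linarith [hz.2] : (0:ℝ) ≤ T - z)]

lemma swap_tri {G : ℝ → ℝ → ℝ} (hG : Continuous (Function.uncurry G)) {T : ℝ} (hT : 0 ≤ T) :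
    ∫ z in (0:ℝ)..T, ∫ u in (0:ℝ)..(T - z), G u z
      = ∫ u in (0:ℝ)..T, ∫ z in (0:ℝ)..(T - u), G u z := by
  set H : ℝ × ℝ → ℝ := {p : ℝ × ℝ | p.1 + p.2 ≤ T}.indicator (Function.uncurry G) with hH
  have hmeas : MeasurableSet {p : ℝ × ℝ | p.1 + p.2 ≤ T} :=
    (isClosed_le (by fun_prop) continuous_const).measurableSet
  have hint : Integrable H ((volume.restrict (Ioc 0 T)).prod (volume.restrict (Ioc 0 T))) := by
    rw [Measure.prod_restrict]
    exact ((hG.continuousOn.integrableOn_compact (isCompact_Icc.prod isCompact_Icc)).mono_set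
      (Set.prod_mono Ioc_subset_Icc_self Ioc_subset_Icc_self)).indicator hmeas
  have hintswap : Integrable (fun p : ℝ × ℝ => H (p.2, p.1))
      ((volume.restrict (Ioc 0 T)).prod (volume.restrict (Ioc 0 T))) := by
    have := hint.swap
    exact this
  have hL : ∫ z in (0:ℝ)..T, ∫ u in (0:ℝ)..(T - z), G u z
      = ∫ z in Ioc (0:ℝ) T, ∫ u in Ioc (0:ℝ) T, H (u, z) := by
    rw [intervalIntegral.integral_of_le hT]
    exact MeasureTheory.setIntegral_congr_fun measurableSet_Ioc
      fun z hz => tri_slice hG hz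
  have hR : ∫ u in (0:ℝ)..T, ∫ z in (0:ℝ)..(T - u), G u z
      = ∫ u in Ioc (0:ℝ) T, ∫ z in Ioc (0:ℝ) T, H (u, z) := by
    rw [intervalIntegral.integral_of_le hT]
    apply MeasureTheory.setIntegral_congr_fun measurableSet_Ioc
    intro u hu
    have := tri_slice (G := fun z u => G u z)
      (hG.comp (continuous_swap : Continuous (Prod.swap : ℝ × ℝ → ℝ × ℝ))) (T := T) hu
    simp only [] at this ⊢
    rw [this]
    apply MeasureTheory.setIntegral_congr_fun measurableSet_Ioc
    intro z _
    show {p : ℝ × ℝ | p.1 + p.2 ≤ T}.indicator (Function.uncurry fun z u => G u z) (z, u)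
      = H (u, z)
    simp only [Set.indicator_apply, Set.mem_setOf_eq, Function.uncurry, hH]
    rw [add_comm z u]
  rw [hL, hR]
  exact MeasureTheory.integral_integral_swap hintswap

lemma ftc_slot0 (hf : ContDiff ℝ 1 f) (b z x y : ℝ) :
    ∫ u in (0:ℝ)..b, pd 0 f ![u, z, x, y] = f ![b, z, x, y] - f ![0, z, x, y] :=
  intervalIntegral.integral_eq_sub_of_hasDerivAt
    (fun u _ => hd_slot0 ((hf.differentiable (by norm_num)).differentiableAt))
    ((cont_comp4 (continuous_pd 0 hf) continuous_id continuous_const continuous_const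
      continuous_const).intervalIntegrable 0 b)
lemma ftc_slot1 (hf : ContDiff ℝ 1 f) (u b x y : ℝ) :
    ∫ z in (0:ℝ)..b, pd 1 f ![u, z, x, y] = f ![u, b, x, y] - f ![u, 0, x, y] :=
  intervalIntegral.integral_eq_sub_of_hasDerivAt
    (fun z _ => hd_slot1 ((hf.differentiable (by norm_num)).differentiableAt))
    ((cont_comp4 (continuous_pd 1 hf) continuous_const continuous_id continuous_const
      continuous_const).intervalIntegrable 0 b)
lemma ftc_slot2 (hf : ContDiff ℝ 1 f) (u z y : ℝ) :
    ∫ x in (0:ℝ)..1, pd 2 f ![u, z, x, y] = f ![u, z, 1, y] - f ![u, z, 0, y] :=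
  intervalIntegral.integral_eq_sub_of_hasDerivAt
    (fun x _ => hd_slot2 ((hf.differentiable (by norm_num)).differentiableAt))
    ((cont_comp4 (continuous_pd 2 hf) continuous_const continuous_const continuous_id
      continuous_const).intervalIntegrable 0 1)
lemma ftc_slot3 (hf : ContDiff ℝ 1 f) (u z x : ℝ) :
    ∫ y in (0:ℝ)..1, pd 3 f ![u, z, x, y] = f ![u, z, x, 1] - f ![u, z, x, 0] :=
  intervalIntegral.integral_eq_sub_of_hasDerivAt
    (fun y _ => hd_slot3 ((hf.differentiable (by norm_num)).differentiableAt))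
    ((cont_comp4 (continuous_pd 3 hf) continuous_const continuous_const continuous_const
      continuous_id).intervalIntegrable 0 1)

lemma add_single2 (u z x y : ℝ) :
    (![u, z, x, y] : V4) + Pi.single 2 1 = ![u, z, x + 1, y] := by
  funext i; fin_cases i <;> simp [Pi.single_apply]
lemma add_single3 (u z x y : ℝ) :
    (![u, z, x, y] : V4) + Pi.single 3 1 = ![u, z, x, y + 1] := by
  funext i; fin_cases i <;> simp [Pi.single_apply]

lemma int_pd2_zero (hf : ContDiff ℝ 1 f) (hper : ∀ p : V4, f (p + Pi.single 2 1) = f p)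
    (u z y : ℝ) : ∫ x in (0:ℝ)..1, pd 2 f ![u, z, x, y] = 0 := by
  rw [ftc_slot2 hf]
  have := hper ![u, z, 0, y]
  rw [add_single2] at this
  norm_num at this
  rw [this, sub_self]
lemma int_pd3_zero (hf : ContDiff ℝ 1 f) (hper : ∀ p : V4, f (p + Pi.single 3 1) = f p)
    (u z x : ℝ) : ∫ y in (0:ℝ)..1, pd 3 f ![u, z, x, y] = 0 := by
  rw [ftc_slot3 hf]
  have := hper ![u, z, x, 0]
  rw [add_single3] at this
  norm_num at this
  rw [this, sub_self]

lemma II_pd2_zero (hf : ContDiff ℝ 1 f) (hper : ∀ p : V4, f (p + Pi.single 2 1) = f p)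
    (u z : ℝ) : II (pd 2 f) u z = 0 := by
  unfold II
  have c2 := continuous_pd 2 hf
  rw [swap_rect (F := fun x y => pd 2 f ![u, z, x, y])
    (show Continuous fun q : ℝ × ℝ => pd 2 f ![u, z, q.1, q.2] from
      cont_comp4 c2 (by fun_prop) (by fun_prop) (by fun_prop) (by fun_prop))
    zero_le_one zero_le_one]
  calc (∫ y in (0:ℝ)..1, ∫ x in (0:ℝ)..1, pd 2 f ![u, z, x, y])
      = ∫ y in (0:ℝ)..1, (0:ℝ) :=
        intervalIntegral.integral_congr fun y _ => int_pd2_zero hf hper u z y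
    _ = 0 := by simp

lemma II_pd3_zero (hf : ContDiff ℝ 1 f) (hper : ∀ p : V4, f (p + Pi.single 3 1) = f p)
    (u z : ℝ) : II (pd 3 f) u z = 0 := by
  unfold II
  calc (∫ x in (0:ℝ)..1, ∫ y in (0:ℝ)..1, pd 3 f ![u, z, x, y])
      = ∫ x in (0:ℝ)..1, (0:ℝ) :=
        intervalIntegral.integral_congr fun x _ => int_pd3_zero hf hper u z x
    _ = 0 := by simp

lemma II_ftc0 (hf : ContDiff ℝ 1 f) (b z : ℝ) (hb : 0 ≤ b) :
    II f b z = II f 0 z + ∫ u in (0:ℝ)..b, II (pd 0 f) u z := by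
  have cf := hf.continuous
  have c0 := continuous_pd 0 hf
  have key : II f b z - II f 0 z = ∫ u in (0:ℝ)..b, II (pd 0 f) u z := by
    calc II f b z - II f 0 z
        = ∫ x in (0:ℝ)..1, ((∫ y in (0:ℝ)..1, f ![b, z, x, y])
            - ∫ y in (0:ℝ)..1, f ![0, z, x, y]) :=
          (intervalIntegral.integral_sub (intg_x cf b z 0 1) (intg_x cf 0 z 0 1)).symm
      _ = ∫ x in (0:ℝ)..1, ∫ y in (0:ℝ)..1, (f ![b, z, x, y] - f ![0, z, x, y]) :=
          intervalIntegral.integral_congr fun x _ =>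
            (intervalIntegral.integral_sub (intg_y cf b z x 0 1) (intg_y cf 0 z x 0 1)).symm
      _ = ∫ x in (0:ℝ)..1, ∫ y in (0:ℝ)..1, ∫ u in (0:ℝ)..b, pd 0 f ![u, z, x, y] :=
          intervalIntegral.integral_congr fun x _ =>
            intervalIntegral.integral_congr fun y _ => (ftc_slot0 hf b z x y).symm
      _ = ∫ x in (0:ℝ)..1, ∫ u in (0:ℝ)..b, ∫ y in (0:ℝ)..1, pd 0 f ![u, z, x, y] :=
          intervalIntegral.integral_congr fun x _ =>
            swap_rect (F := fun y u => pd 0 f ![u, z, x, y])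
              (show Continuous fun q : ℝ × ℝ => pd 0 f ![q.2, z, x, q.1] from
                cont_comp4 c0 (by fun_prop) (by fun_prop) (by fun_prop) (by fun_prop))
              zero_le_one hb
      _ = ∫ u in (0:ℝ)..b, ∫ x in (0:ℝ)..1, ∫ y in (0:ℝ)..1, pd 0 f ![u, z, x, y] :=
          swap_rect (F := fun x u => ∫ y in (0:ℝ)..1, pd 0 f ![u, z, x, y])
            (show Continuous fun q : ℝ × ℝ => ∫ y in (0:ℝ)..1, pd 0 f ![q.2, z, q.1, y] from
              (cont_inner3 c0).comp
                (by fun_prop : Continuous fun q : ℝ × ℝ => (q.2, z, q.1)))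
            zero_le_one hb
      _ = ∫ u in (0:ℝ)..b, II (pd 0 f) u z := rfl
  linarith

lemma II_ftc1 (hf : ContDiff ℝ 1 f) (u b : ℝ) (hb : 0 ≤ b) :
    II f u b = II f u 0 + ∫ z in (0:ℝ)..b, II (pd 1 f) u z := by
  have cf := hf.continuous
  have c1 := continuous_pd 1 hf
  have key : II f u b - II f u 0 = ∫ z in (0:ℝ)..b, II (pd 1 f) u z := by
    calc II f u b - II f u 0
        = ∫ x in (0:ℝ)..1, ((∫ y in (0:ℝ)..1, f ![u, b, x, y])
            - ∫ y in (0:ℝ)..1, f ![u, 0, x, y]) :=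
          (intervalIntegral.integral_sub (intg_x cf u b 0 1) (intg_x cf u 0 0 1)).symm
      _ = ∫ x in (0:ℝ)..1, ∫ y in (0:ℝ)..1, (f ![u, b, x, y] - f ![u, 0, x, y]) :=
          intervalIntegral.integral_congr fun x _ =>
            (intervalIntegral.integral_sub (intg_y cf u b x 0 1) (intg_y cf u 0 x 0 1)).symm
      _ = ∫ x in (0:ℝ)..1, ∫ y in (0:ℝ)..1, ∫ z in (0:ℝ)..b, pd 1 f ![u, z, x, y] :=
          intervalIntegral.integral_congr fun x _ =>
            intervalIntegral.integral_congr fun y _ => (ftc_slot1 hf u b x y).symm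
      _ = ∫ x in (0:ℝ)..1, ∫ z in (0:ℝ)..b, ∫ y in (0:ℝ)..1, pd 1 f ![u, z, x, y] :=
          intervalIntegral.integral_congr fun x _ =>
            swap_rect (F := fun y z => pd 1 f ![u, z, x, y])
              (show Continuous fun q : ℝ × ℝ => pd 1 f ![u, q.2, x, q.1] from
                cont_comp4 c1 (by fun_prop) (by fun_prop) (by fun_prop) (by fun_prop))
              zero_le_one hb
      _ = ∫ z in (0:ℝ)..b, ∫ x in (0:ℝ)..1, ∫ y in (0:ℝ)..1, pd 1 f ![u, z, x, y] :=
          swap_rect (F := fun x z => ∫ y in (0:ℝ)..1, pd 1 f ![u, z, x, y])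
            (show Continuous fun q : ℝ × ℝ => ∫ y in (0:ℝ)..1, pd 1 f ![u, q.2, q.1, y] from
              (cont_inner3 c1).comp
                (by fun_prop : Continuous fun q : ℝ × ℝ => (u, q.2, q.1)))
            zero_le_one hb
      _ = ∫ z in (0:ℝ)..b, II (pd 1 f) u z := rfl
  linarith

end Toolkit
/-- flux densities -/
noncomputable def Fu (R : V4 → ℝ) : V4 → ℝ := fun p => 2*pd 2 R p^2 + 2*pd 3 R p^2 + 2*pd 1 R p^2
noncomputable def Fz (R P Q : V4 → ℝ) : V4 → ℝ := fun p =>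
  -pd 1 R p^2 + pd 2 P p^2 + pd 2 Q p^2 + pd 3 P p^2 + pd 3 Q p^2
noncomputable def Fx (R P : V4 → ℝ) : V4 → ℝ := fun p =>
  2*pd 2 R p*pd 2 P p + 2*pd 3 R p*pd 3 P p + 2*pd 1 R p*pd 2 R p
noncomputable def Fy (R Q : V4 → ℝ) : V4 → ℝ := fun p =>
  2*pd 2 R p*pd 2 Q p + 2*pd 3 R p*pd 3 Q p + 2*pd 1 R p*pd 3 R p

section densities
variable {R P Q : V4 → ℝ}

lemma contDiff_Fu (hR : ContDiff ℝ 3 R) : ContDiff ℝ 2 (Fu R) := by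
  have h1 := contDiff_pd3 1 hR; have h2 := contDiff_pd3 2 hR; have h3 := contDiff_pd3 3 hR
  exact ((contDiff_const.mul (h2.pow 2)).add (contDiff_const.mul (h3.pow 2))).add
    (contDiff_const.mul (h1.pow 2))

lemma contDiff_Fz (hR : ContDiff ℝ 3 R) (hP : ContDiff ℝ 3 P) (hQ : ContDiff ℝ 3 Q) :
    ContDiff ℝ 2 (Fz R P Q) := by
  have h1 := contDiff_pd3 1 hR
  have p2 := contDiff_pd3 2 hP; have p3 := contDiff_pd3 3 hP
  have q2 := contDiff_pd3 2 hQ; have q3 := contDiff_pd3 3 hQ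
  exact (((((h1.pow 2).neg).add (p2.pow 2)).add (q2.pow 2)).add (p3.pow 2)).add (q3.pow 2)

lemma contDiff_Fx (hR : ContDiff ℝ 3 R) (hP : ContDiff ℝ 3 P) : ContDiff ℝ 2 (Fx R P) := by
  have h1 := contDiff_pd3 1 hR; have h2 := contDiff_pd3 2 hR; have h3 := contDiff_pd3 3 hR
  have p2 := contDiff_pd3 2 hP; have p3 := contDiff_pd3 3 hP
  exact (((contDiff_const.mul h2).mul p2).add ((contDiff_const.mul h3).mul p3)).add
    ((contDiff_const.mul h1).mul h2)

lemma contDiff_Fy (hR : ContDiff ℝ 3 R) (hQ : ContDiff ℝ 3 Q) : ContDiff ℝ 2 (Fy R Q) := by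
  have h1 := contDiff_pd3 1 hR; have h2 := contDiff_pd3 2 hR; have h3 := contDiff_pd3 3 hR
  have q2 := contDiff_pd3 2 hQ; have q3 := contDiff_pd3 3 hQ
  exact (((contDiff_const.mul h2).mul q2).add ((contDiff_const.mul h3).mul q3)).add
    ((contDiff_const.mul h1).mul h3)

lemma pd_Fu (hR : ContDiff ℝ 3 R) (a : Fin 4) (p : V4) :
    pd a (Fu R) p = 4*pd 2 R p*pd a (pd 2 R) p + 4*pd 3 R p*pd a (pd 3 R) p
      + 4*pd 1 R p*pd a (pd 1 R) p := by
  have d1 : DifferentiableAt ℝ (pd 1 R) p :=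
    ((contDiff_pd3 1 hR).differentiable (by norm_num)).differentiableAt
  have d2 : DifferentiableAt ℝ (pd 2 R) p :=
    ((contDiff_pd3 2 hR).differentiable (by norm_num)).differentiableAt
  have d3 : DifferentiableAt ℝ (pd 3 R) p :=
    ((contDiff_pd3 3 hR).differentiable (by norm_num)).differentiableAt
  have s1 := d1.fun_pow 2; have s2 := d2.fun_pow 2; have s3 := d3.fun_pow 2
  have c1 := s1.const_mul (2:ℝ); have c2 := s2.const_mul (2:ℝ); have c3 := s3.const_mul (2:ℝ)
  calc pd a (Fu R) p
      = pd a (fun q => (2*pd 2 R q^2 + 2*pd 3 R q^2) + 2*pd 1 R q^2) p := rfl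
    _ = pd a (fun q => 2*pd 2 R q^2 + 2*pd 3 R q^2) p + pd a (fun q => 2*pd 1 R q^2) p :=
        pd_fun_add (c2.add c3) c1 a
    _ = (pd a (fun q => 2*pd 2 R q^2) p + pd a (fun q => 2*pd 3 R q^2) p)
        + pd a (fun q => 2*pd 1 R q^2) p := by rw [pd_fun_add c2 c3 a]
    _ = (2*pd a (fun q => pd 2 R q^2) p + 2*pd a (fun q => pd 3 R q^2) p)
        + 2*pd a (fun q => pd 1 R q^2) p := by
        rw [pd_fun_const_mul s2 2 a, pd_fun_const_mul s3 2 a, pd_fun_const_mul s1 2 a]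
    _ = _ := by rw [pd_fun_sq d2 a, pd_fun_sq d3 a, pd_fun_sq d1 a]; ring

end densities

section densities2
variable {R P Q : V4 → ℝ}

lemma pd_Fz (hR : ContDiff ℝ 3 R) (hP : ContDiff ℝ 3 P) (hQ : ContDiff ℝ 3 Q)
    (a : Fin 4) (p : V4) :
    pd a (Fz R P Q) p = -(2*pd 1 R p*pd a (pd 1 R) p) + 2*pd 2 P p*pd a (pd 2 P) p
      + 2*pd 2 Q p*pd a (pd 2 Q) p + 2*pd 3 P p*pd a (pd 3 P) p
      + 2*pd 3 Q p*pd a (pd 3 Q) p := by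
  have d1 : DifferentiableAt ℝ (pd 1 R) p :=
    ((contDiff_pd3 1 hR).differentiable (by norm_num)).differentiableAt
  have dp2 : DifferentiableAt ℝ (pd 2 P) p :=
    ((contDiff_pd3 2 hP).differentiable (by norm_num)).differentiableAt
  have dp3 : DifferentiableAt ℝ (pd 3 P) p :=
    ((contDiff_pd3 3 hP).differentiable (by norm_num)).differentiableAt
  have dq2 : DifferentiableAt ℝ (pd 2 Q) p :=
    ((contDiff_pd3 2 hQ).differentiable (by norm_num)).differentiableAt
  have dq3 : DifferentiableAt ℝ (pd 3 Q) p :=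
    ((contDiff_pd3 3 hQ).differentiable (by norm_num)).differentiableAt
  have s1 := (d1.fun_pow 2).fun_neg
  have sp2 := dp2.fun_pow 2; have sp3 := dp3.fun_pow 2; have sq2 := dq2.fun_pow 2; have sq3 := dq3.fun_pow 2
  calc pd a (Fz R P Q) p
      = pd a (fun q => (((-pd 1 R q^2 + pd 2 P q^2) + pd 2 Q q^2) + pd 3 P q^2)
          + pd 3 Q q^2) p := rfl
    _ = pd a (fun q => ((-pd 1 R q^2 + pd 2 P q^2) + pd 2 Q q^2) + pd 3 P q^2) p
        + pd a (fun q => pd 3 Q q^2) p :=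
        pd_fun_add (((s1.add sp2).add sq2).add sp3) sq3 a
    _ = (pd a (fun q => (-pd 1 R q^2 + pd 2 P q^2) + pd 2 Q q^2) p
        + pd a (fun q => pd 3 P q^2) p) + pd a (fun q => pd 3 Q q^2) p := by
        rw [pd_fun_add ((s1.fun_add sp2).fun_add sq2) sp3 a]
    _ = ((pd a (fun q => -pd 1 R q^2 + pd 2 P q^2) p + pd a (fun q => pd 2 Q q^2) p)
        + pd a (fun q => pd 3 P q^2) p) + pd a (fun q => pd 3 Q q^2) p := by
        rw [pd_fun_add (s1.fun_add sp2) sq2 a]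
    _ = (((pd a (fun q => -pd 1 R q^2) p + pd a (fun q => pd 2 P q^2) p)
        + pd a (fun q => pd 2 Q q^2) p)
        + pd a (fun q => pd 3 P q^2) p) + pd a (fun q => pd 3 Q q^2) p := by
        rw [pd_fun_add s1 sp2 a]
    _ = (((-pd a (fun q => pd 1 R q^2) p + pd a (fun q => pd 2 P q^2) p)
        + pd a (fun q => pd 2 Q q^2) p)
        + pd a (fun q => pd 3 P q^2) p) + pd a (fun q => pd 3 Q q^2) p := by
        rw [pd_fun_neg (f := fun q => pd 1 R q^2) a]
    _ = _ := by
        rw [pd_fun_sq d1 a, pd_fun_sq dp2 a, pd_fun_sq dq2 a, pd_fun_sq dp3 a, pd_fun_sq dq3 a]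

lemma pd_Fx (hR : ContDiff ℝ 3 R) (hP : ContDiff ℝ 3 P) (a : Fin 4) (p : V4) :
    pd a (Fx R P) p = 2*(pd a (pd 2 R) p*pd 2 P p + pd 2 R p*pd a (pd 2 P) p)
      + 2*(pd a (pd 3 R) p*pd 3 P p + pd 3 R p*pd a (pd 3 P) p)
      + 2*(pd a (pd 1 R) p*pd 2 R p + pd 1 R p*pd a (pd 2 R) p) := by
  have d1 : DifferentiableAt ℝ (pd 1 R) p :=
    ((contDiff_pd3 1 hR).differentiable (by norm_num)).differentiableAt
  have d2 : DifferentiableAt ℝ (pd 2 R) p :=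
    ((contDiff_pd3 2 hR).differentiable (by norm_num)).differentiableAt
  have d3 : DifferentiableAt ℝ (pd 3 R) p :=
    ((contDiff_pd3 3 hR).differentiable (by norm_num)).differentiableAt
  have dp2 : DifferentiableAt ℝ (pd 2 P) p :=
    ((contDiff_pd3 2 hP).differentiable (by norm_num)).differentiableAt
  have dp3 : DifferentiableAt ℝ (pd 3 P) p :=
    ((contDiff_pd3 3 hP).differentiable (by norm_num)).differentiableAt
  have m1 := ((d2.const_mul (2:ℝ)).fun_mul dp2)
  have m2 := ((d3.const_mul (2:ℝ)).fun_mul dp3)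
  have m3 := ((d1.const_mul (2:ℝ)).fun_mul d2)
  calc pd a (Fx R P) p
      = pd a (fun q => (2*pd 2 R q*pd 2 P q + 2*pd 3 R q*pd 3 P q) + 2*pd 1 R q*pd 2 R q) p := rfl
    _ = pd a (fun q => 2*pd 2 R q*pd 2 P q + 2*pd 3 R q*pd 3 P q) p
        + pd a (fun q => 2*pd 1 R q*pd 2 R q) p := pd_fun_add (m1.add m2) m3 a
    _ = (pd a (fun q => 2*pd 2 R q*pd 2 P q) p + pd a (fun q => 2*pd 3 R q*pd 3 P q) p)
        + pd a (fun q => 2*pd 1 R q*pd 2 R q) p := by rw [pd_fun_add m1 m2 a]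
    _ = (pd a (fun q => 2*pd 2 R q) p*pd 2 P p + (2*pd 2 R p)*pd a (pd 2 P) p
        + (pd a (fun q => 2*pd 3 R q) p*pd 3 P p + (2*pd 3 R p)*pd a (pd 3 P) p))
        + (pd a (fun q => 2*pd 1 R q) p*pd 2 R p + (2*pd 1 R p)*pd a (pd 2 R) p) := by
        rw [pd_fun_mul (d2.const_mul (2:ℝ)) dp2 a, pd_fun_mul (d3.const_mul (2:ℝ)) dp3 a,
          pd_fun_mul (d1.const_mul (2:ℝ)) d2 a]
    _ = _ := by
        rw [pd_fun_const_mul d2 2 a, pd_fun_const_mul d3 2 a, pd_fun_const_mul d1 2 a]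
        ring

lemma pd_Fy (hR : ContDiff ℝ 3 R) (hQ : ContDiff ℝ 3 Q) (a : Fin 4) (p : V4) :
    pd a (Fy R Q) p = 2*(pd a (pd 2 R) p*pd 2 Q p + pd 2 R p*pd a (pd 2 Q) p)
      + 2*(pd a (pd 3 R) p*pd 3 Q p + pd 3 R p*pd a (pd 3 Q) p)
      + 2*(pd a (pd 1 R) p*pd 3 R p + pd 1 R p*pd a (pd 3 R) p) := by
  have d1 : DifferentiableAt ℝ (pd 1 R) p :=
    ((contDiff_pd3 1 hR).differentiable (by norm_num)).differentiableAt
  have d2 : DifferentiableAt ℝ (pd 2 R) p :=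
    ((contDiff_pd3 2 hR).differentiable (by norm_num)).differentiableAt
  have d3 : DifferentiableAt ℝ (pd 3 R) p :=
    ((contDiff_pd3 3 hR).differentiable (by norm_num)).differentiableAt
  have dq2 : DifferentiableAt ℝ (pd 2 Q) p :=
    ((contDiff_pd3 2 hQ).differentiable (by norm_num)).differentiableAt
  have dq3 : DifferentiableAt ℝ (pd 3 Q) p :=
    ((contDiff_pd3 3 hQ).differentiable (by norm_num)).differentiableAt
  have m1 := ((d2.const_mul (2:ℝ)).fun_mul dq2)
  have m2 := ((d3.const_mul (2:ℝ)).fun_mul dq3)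
  have m3 := ((d1.const_mul (2:ℝ)).fun_mul d3)
  calc pd a (Fy R Q) p
      = pd a (fun q => (2*pd 2 R q*pd 2 Q q + 2*pd 3 R q*pd 3 Q q) + 2*pd 1 R q*pd 3 R q) p := rfl
    _ = pd a (fun q => 2*pd 2 R q*pd 2 Q q + 2*pd 3 R q*pd 3 Q q) p
        + pd a (fun q => 2*pd 1 R q*pd 3 R q) p := pd_fun_add (m1.add m2) m3 a
    _ = (pd a (fun q => 2*pd 2 R q*pd 2 Q q) p + pd a (fun q => 2*pd 3 R q*pd 3 Q q) p)
        + pd a (fun q => 2*pd 1 R q*pd 3 R q) p := by rw [pd_fun_add m1 m2 a]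
    _ = (pd a (fun q => 2*pd 2 R q) p*pd 2 Q p + (2*pd 2 R p)*pd a (pd 2 Q) p
        + (pd a (fun q => 2*pd 3 R q) p*pd 3 Q p + (2*pd 3 R p)*pd a (pd 3 Q) p))
        + (pd a (fun q => 2*pd 1 R q) p*pd 3 R p + (2*pd 1 R p)*pd a (pd 3 R) p) := by
        rw [pd_fun_mul (d2.const_mul (2:ℝ)) dq2 a, pd_fun_mul (d3.const_mul (2:ℝ)) dq3 a,
          pd_fun_mul (d1.const_mul (2:ℝ)) d3 a]
    _ = _ := by
        rw [pd_fun_const_mul d2 2 a, pd_fun_const_mul d3 2 a, pd_fun_const_mul d1 2 a]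
        ring

end densities2

section diverg
variable {R P Q : V4 → ℝ}

lemma divergence_id (hR : ContDiff ℝ 3 R) (hP : ContDiff ℝ 3 P) (hQ : ContDiff ℝ 3 Q)
    (e1 : ∀ p : V4, 2 * pd 0 R p = pd 2 P p + pd 3 Q p + pd 1 R p)
    (e2 : ∀ p : V4, pd 1 P p = pd 2 R p)
    (e3 : ∀ p : V4, pd 1 Q p = pd 3 R p) (p : V4) :
    pd 0 (Fu R) p + pd 1 (Fz R P Q) p = pd 2 (Fx R P) p + pd 3 (Fy R Q) p := by
  have hR2 : ContDiff ℝ 2 R := hR.of_le (by norm_num)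
  have hP2 : ContDiff ℝ 2 P := hP.of_le (by norm_num)
  have hQ2 : ContDiff ℝ 2 Q := hQ.of_le (by norm_num)
  have d0 : DifferentiableAt ℝ (pd 0 R) p :=
    ((contDiff_pd3 0 hR).differentiable (by norm_num)).differentiableAt
  have dR1 : DifferentiableAt ℝ (pd 1 R) p :=
    ((contDiff_pd3 1 hR).differentiable (by norm_num)).differentiableAt
  have dP2 : DifferentiableAt ℝ (pd 2 P) p :=
    ((contDiff_pd3 2 hP).differentiable (by norm_num)).differentiableAt
  have dQ3 : DifferentiableAt ℝ (pd 3 Q) p :=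
    ((contDiff_pd3 3 hQ).differentiable (by norm_num)).differentiableAt
  have de : ∀ a : Fin 4, 2 * pd a (pd 0 R) p
      = pd a (pd 2 P) p + pd a (pd 3 Q) p + pd a (pd 1 R) p := by
    intro a
    have hfe : (fun q => 2 * pd 0 R q) = fun q => pd 2 P q + pd 3 Q q + pd 1 R q := funext e1
    have h := congrFun (congrArg (pd a) hfe) p
    rw [pd_fun_const_mul d0 2 a] at h
    calc 2 * pd a (pd 0 R) p = pd a (fun q => pd 2 P q + pd 3 Q q + pd 1 R q) p := h
      _ = pd a (fun q => pd 2 P q + pd 3 Q q) p + pd a (pd 1 R) p :=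
          pd_fun_add (dP2.add dQ3) dR1 a
      _ = pd a (pd 2 P) p + pd a (pd 3 Q) p + pd a (pd 1 R) p := by
          rw [pd_fun_add dP2 dQ3 a]
  have deP : ∀ a : Fin 4, pd a (pd 1 P) p = pd a (pd 2 R) p :=
    fun a => congrFun (congrArg (pd a) (funext e2)) p
  have deQ : ∀ a : Fin 4, pd a (pd 1 Q) p = pd a (pd 3 R) p :=
    fun a => congrFun (congrArg (pd a) (funext e3)) p
  have c1 : pd 0 (pd 2 R) p = pd 2 (pd 0 R) p := pd_pd_comm hR2 0 2 p
  have c2 : pd 0 (pd 3 R) p = pd 3 (pd 0 R) p := pd_pd_comm hR2 0 3 p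
  have c3 : pd 0 (pd 1 R) p = pd 1 (pd 0 R) p := pd_pd_comm hR2 0 1 p
  have g1 : pd 1 (pd 2 P) p = pd 2 (pd 2 R) p := (pd_pd_comm hP2 1 2 p).trans (deP 2)
  have g2 : pd 1 (pd 3 Q) p = pd 3 (pd 3 R) p := (pd_pd_comm hQ2 1 3 p).trans (deQ 3)
  have g3 : pd 1 (pd 2 Q) p = pd 2 (pd 3 R) p := (pd_pd_comm hQ2 1 2 p).trans (deQ 2)
  have g4 : pd 1 (pd 3 P) p = pd 2 (pd 3 R) p :=
    ((pd_pd_comm hP2 1 3 p).trans (deP 3)).trans (pd_pd_comm hR2 3 2 p)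
  have f1 : pd 2 (pd 3 P) p = pd 3 (pd 2 P) p := pd_pd_comm hP2 2 3 p
  have f2 : pd 3 (pd 2 Q) p = pd 2 (pd 3 Q) p := pd_pd_comm hQ2 3 2 p
  have f3 : pd 3 (pd 2 R) p = pd 2 (pd 3 R) p := pd_pd_comm hR2 3 2 p
  have de1' : 2 * pd 1 (pd 0 R) p
      = pd 2 (pd 2 R) p + pd 3 (pd 3 R) p + pd 1 (pd 1 R) p := by
    rw [de 1, g1, g2]
  rw [pd_Fu hR 0 p, pd_Fz hR hP hQ 1 p, pd_Fx hR hP 2 p, pd_Fy hR hQ 3 p,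
    c1, c2, c3, g1, g2, g3, g4, f1, f2, f3]
  linear_combination 2*pd 2 R p*(de 2) + 2*pd 3 R p*(de 3) + 2*pd 1 R p*de1'
end diverg
/-- Energy identity and estimate for the derivatives in the null-plane
characteristic problem. Coordinates `(u,z,x,y)` are indices `0,1,2,3`; the C³
fields are periodic in `x,y` and satisfy `2R_u = P_x + Q_y + R_z`, `P_z = R_x`,
`Q_z = R_y`. Then the flux identity for
`w = (R_x,R_y,R_z,P_x,Q_x,P_y,Q_y)` holds, and consequently the norm of `w`
on `{u+z=T}` is bounded by twice the derivative data integrals. -/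
theorem stmt_11 (R P Q : (Fin 4 → ℝ) → ℝ)
    (hR : ContDiff ℝ 3 R) (hP : ContDiff ℝ 3 P) (hQ : ContDiff ℝ 3 Q)
    (hperx : ∀ p : Fin 4 → ℝ, R (Function.update p 2 (p 2 + 1)) = R p ∧
      P (Function.update p 2 (p 2 + 1)) = P p ∧
      Q (Function.update p 2 (p 2 + 1)) = Q p)
    (hpery : ∀ p : Fin 4 → ℝ, R (Function.update p 3 (p 3 + 1)) = R p ∧
      P (Function.update p 3 (p 3 + 1)) = P p ∧
      Q (Function.update p 3 (p 3 + 1)) = Q p)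
    (e1 : ∀ p : Fin 4 → ℝ, 2 * pd 0 R p = pd 2 P p + pd 3 Q p + pd 1 R p)
    (e2 : ∀ p : Fin 4 → ℝ, pd 1 P p = pd 2 R p)
    (e3 : ∀ p : Fin 4 → ℝ, pd 1 Q p = pd 3 R p) :
    ∀ T : ℝ, 0 < T →
      ((∫ z in (0:ℝ)..T, ∫ x in (0:ℝ)..1, ∫ y in (0:ℝ)..1,
          (2 * pd 2 R ![T - z, z, x, y] ^ 2 + 2 * pd 3 R ![T - z, z, x, y] ^ 2
            + pd 1 R ![T - z, z, x, y] ^ 2 + pd 2 P ![T - z, z, x, y] ^ 2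
            + pd 2 Q ![T - z, z, x, y] ^ 2 + pd 3 P ![T - z, z, x, y] ^ 2
            + pd 3 Q ![T - z, z, x, y] ^ 2))
        = 2 * (∫ z in (0:ℝ)..T, ∫ x in (0:ℝ)..1, ∫ y in (0:ℝ)..1,
            (pd 2 R ![0, z, x, y] ^ 2 + pd 3 R ![0, z, x, y] ^ 2
              + pd 1 R ![0, z, x, y] ^ 2))
          + (∫ u in (0:ℝ)..T, ∫ x in (0:ℝ)..1, ∫ y in (0:ℝ)..1,
            (-pd 1 R ![u, 0, x, y] ^ 2 + pd 2 P ![u, 0, x, y] ^ 2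
              + pd 2 Q ![u, 0, x, y] ^ 2 + pd 3 P ![u, 0, x, y] ^ 2
              + pd 3 Q ![u, 0, x, y] ^ 2)))
      ∧
      ((∫ z in (0:ℝ)..T, ∫ x in (0:ℝ)..1, ∫ y in (0:ℝ)..1,
          (pd 2 R ![T - z, z, x, y] ^ 2 + pd 3 R ![T - z, z, x, y] ^ 2
            + pd 1 R ![T - z, z, x, y] ^ 2 + pd 2 P ![T - z, z, x, y] ^ 2
            + pd 2 Q ![T - z, z, x, y] ^ 2 + pd 3 P ![T - z, z, x, y] ^ 2
            + pd 3 Q ![T - z, z, x, y] ^ 2))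
        ≤ 2 * ((∫ z in (0:ℝ)..T, ∫ x in (0:ℝ)..1, ∫ y in (0:ℝ)..1,
            (pd 2 R ![0, z, x, y] ^ 2 + pd 3 R ![0, z, x, y] ^ 2
              + pd 1 R ![0, z, x, y] ^ 2))
          + (∫ u in (0:ℝ)..T, ∫ x in (0:ℝ)..1, ∫ y in (0:ℝ)..1,
            (pd 2 P ![u, 0, x, y] ^ 2 + pd 2 Q ![u, 0, x, y] ^ 2
              + pd 3 P ![u, 0, x, y] ^ 2 + pd 3 Q ![u, 0, x, y] ^ 2)))) := by
  intro T hT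
  -- smoothness and continuity facts
  have hR1 : ContDiff ℝ 1 R := hR.of_le (by norm_num)
  have hP1 : ContDiff ℝ 1 P := hP.of_le (by norm_num)
  have hQ1 : ContDiff ℝ 1 Q := hQ.of_le (by norm_num)
  have hFu2 : ContDiff ℝ 2 (Fu R) := contDiff_Fu hR
  have hFz2 : ContDiff ℝ 2 (Fz R P Q) := contDiff_Fz hR hP hQ
  have hFx2 : ContDiff ℝ 2 (Fx R P) := contDiff_Fx hR hP
  have hFy2 : ContDiff ℝ 2 (Fy R Q) := contDiff_Fy hR hQ
  have hFu1 : ContDiff ℝ 1 (Fu R) := hFu2.of_le (by norm_num)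
  have hFz1 : ContDiff ℝ 1 (Fz R P Q) := hFz2.of_le (by norm_num)
  have hFx1 : ContDiff ℝ 1 (Fx R P) := hFx2.of_le (by norm_num)
  have hFy1 : ContDiff ℝ 1 (Fy R Q) := hFy2.of_le (by norm_num)
  have cFu : Continuous (Fu R) := hFu1.continuous
  have cFz : Continuous (Fz R P Q) := hFz1.continuous
  have cpdFu0 : Continuous (pd 0 (Fu R)) := continuous_pd 0 hFu1
  have cpdFz1 : Continuous (pd 1 (Fz R P Q)) := continuous_pd 1 hFz1
  have cpdFx2 : Continuous (pd 2 (Fx R P)) := continuous_pd 2 hFx1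
  have cpdFy3 : Continuous (pd 3 (Fy R Q)) := continuous_pd 3 hFy1
  -- periodicity in translation form
  have hRdiff : Differentiable ℝ R := hR.differentiable (by norm_num)
  have hPdiff : Differentiable ℝ P := hP.differentiable (by norm_num)
  have hQdiff : Differentiable ℝ Q := hQ.differentiable (by norm_num)
  have hRper2 : ∀ p : V4, R (p + Pi.single 2 1) = R p := fun p => by
    rw [← update_eq_add p 2]; exact (hperx p).1
  have hPper2 : ∀ p : V4, P (p + Pi.single 2 1) = P p := fun p => by
    rw [← update_eq_add p 2]; exact (hperx p).2.1
  have hQper2 : ∀ p : V4, Q (p + Pi.single 2 1) = Q p := fun p => by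
    rw [← update_eq_add p 2]; exact (hperx p).2.2
  have hRper3 : ∀ p : V4, R (p + Pi.single 3 1) = R p := fun p => by
    rw [← update_eq_add p 3]; exact (hpery p).1
  have hPper3 : ∀ p : V4, P (p + Pi.single 3 1) = P p := fun p => by
    rw [← update_eq_add p 3]; exact (hpery p).2.1
  have hQper3 : ∀ p : V4, Q (p + Pi.single 3 1) = Q p := fun p => by
    rw [← update_eq_add p 3]; exact (hpery p).2.2
  have pdR2 : ∀ (a : Fin 4) (p : V4), pd a R (p + Pi.single 2 1) = pd a R p :=
    pd_periodic hRdiff hRper2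
  have pdP2 : ∀ (a : Fin 4) (p : V4), pd a P (p + Pi.single 2 1) = pd a P p :=
    pd_periodic hPdiff hPper2
  have pdR3 : ∀ (a : Fin 4) (p : V4), pd a R (p + Pi.single 3 1) = pd a R p :=
    pd_periodic hRdiff hRper3
  have pdQ3 : ∀ (a : Fin 4) (p : V4), pd a Q (p + Pi.single 3 1) = pd a Q p :=
    pd_periodic hQdiff hQper3
  have perFx2 : ∀ p : V4, Fx R P (p + Pi.single 2 1) = Fx R P p := by
    intro p
    simp only [Fx]
    rw [pdR2 2 p, pdR2 3 p, pdR2 1 p, pdP2 2 p, pdP2 3 p]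
  have perFy3 : ∀ p : V4, Fy R Q (p + Pi.single 3 1) = Fy R Q p := by
    intro p
    simp only [Fy]
    rw [pdR3 2 p, pdR3 3 p, pdR3 1 p, pdQ3 2 p, pdQ3 3 p]
  -- key pointwise-to-II identity
  have IIFx0 : ∀ u z : ℝ, II (pd 2 (Fx R P)) u z = 0 := II_pd2_zero hFx1 perFx2
  have IIFy0 : ∀ u z : ℝ, II (pd 3 (Fy R Q)) u z = 0 := II_pd3_zero hFy1 perFy3
  have hkey : ∀ u z : ℝ, II (pd 1 (Fz R P Q)) u z = -II (pd 0 (Fu R)) u z := by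
    intro u z
    have hpt : ∀ p : V4, pd 1 (Fz R P Q) p
        = pd 2 (Fx R P) p + (pd 3 (Fy R Q) p + -pd 0 (Fu R) p) := fun p => by
      have := divergence_id hR hP hQ e1 e2 e3 p; linarith
    calc II (pd 1 (Fz R P Q)) u z
        = II (fun p => pd 2 (Fx R P) p + (pd 3 (Fy R Q) p + -pd 0 (Fu R) p)) u z :=
          II_congr hpt u z
      _ = II (pd 2 (Fx R P)) u z
          + II (fun p => pd 3 (Fy R Q) p + -pd 0 (Fu R) p) u z :=
          II_add cpdFx2 (cpdFy3.add cpdFu0.neg) u z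
      _ = II (pd 2 (Fx R P)) u z
          + (II (pd 3 (Fy R Q)) u z + II (fun p => -pd 0 (Fu R) p) u z) := by
          rw [II_add cpdFy3 cpdFu0.fun_neg u z]
      _ = -II (pd 0 (Fu R)) u z := by
          rw [IIFx0 u z, IIFy0 u z, II_neg]; ring
  -- main identity at II level
  have i1 : IntervalIntegrable (fun z => II (Fu R) (T - z) z) volume 0 T :=
    ((cont_II cFu).comp (by fun_prop : Continuous fun z : ℝ => (T - z, z))
      ).intervalIntegrable 0 T
  have i2 : IntervalIntegrable (fun z => II (Fz R P Q) (T - z) z) volume 0 T :=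
    ((cont_II cFz).comp (by fun_prop : Continuous fun z : ℝ => (T - z, z))
      ).intervalIntegrable 0 T
  have iA : IntervalIntegrable (fun z => II (Fu R) 0 z) volume 0 T :=
    ((cont_II cFu).comp (by fun_prop : Continuous fun z : ℝ => ((0:ℝ), z))
      ).intervalIntegrable 0 T
  have contW : Continuous fun z : ℝ => ∫ u in (0:ℝ)..(T - z), II (pd 0 (Fu R)) u z := by
    apply intervalIntegral.continuous_parametric_intervalIntegral_of_continuous
      (f := fun (z u : ℝ) => II (pd 0 (Fu R)) u z) (a₀ := (0:ℝ))
    · exact (cont_II cpdFu0).comp (by fun_prop : Continuous fun q : ℝ × ℝ => (q.2, q.1))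
    · fun_prop
  have hFupart : ∫ z in (0:ℝ)..T, II (Fu R) (T - z) z
      = (∫ z in (0:ℝ)..T, II (Fu R) 0 z)
        + ∫ z in (0:ℝ)..T, ∫ u in (0:ℝ)..(T - z), II (pd 0 (Fu R)) u z := by
    rw [← intervalIntegral.integral_add iA (contW.intervalIntegrable 0 T)]
    apply intervalIntegral.integral_congr
    intro z hz
    rw [uIcc_of_le hT.le] at hz
    exact II_ftc0 hFu1 (T - z) z (by linarith [hz.2])
  have hsub : ∫ z in (0:ℝ)..T, II (Fz R P Q) (T - z) z
      = ∫ u in (0:ℝ)..T, II (Fz R P Q) u (T - u) := by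
    calc ∫ z in (0:ℝ)..T, II (Fz R P Q) (T - z) z
        = ∫ z in (0:ℝ)..T, (fun u => II (Fz R P Q) u (T - u)) (T - z) :=
          intervalIntegral.integral_congr fun z _ => by simp
      _ = ∫ u in (T - T)..(T - 0), (fun u => II (Fz R P Q) u (T - u)) u :=
          intervalIntegral.integral_comp_sub_left (fun u => II (Fz R P Q) u (T - u)) T
      _ = ∫ u in (0:ℝ)..T, II (Fz R P Q) u (T - u) := by norm_num
  have iC : IntervalIntegrable (fun u => II (Fz R P Q) u 0) volume 0 T :=
    ((cont_II cFz).comp (by fun_prop : Continuous fun u : ℝ => (u, (0:ℝ)))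
      ).intervalIntegrable 0 T
  have contW2 : Continuous fun u : ℝ => ∫ z in (0:ℝ)..(T - u), II (pd 1 (Fz R P Q)) u z := by
    apply intervalIntegral.continuous_parametric_intervalIntegral_of_continuous
      (f := fun (u z : ℝ) => II (pd 1 (Fz R P Q)) u z) (a₀ := (0:ℝ))
    · exact (cont_II cpdFz1).comp (by fun_prop : Continuous fun q : ℝ × ℝ => (q.1, q.2))
    · fun_prop
  have hFzpart : ∫ u in (0:ℝ)..T, II (Fz R P Q) u (T - u)
      = (∫ u in (0:ℝ)..T, II (Fz R P Q) u 0)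
        + ∫ u in (0:ℝ)..T, ∫ z in (0:ℝ)..(T - u), II (pd 1 (Fz R P Q)) u z := by
    rw [← intervalIntegral.integral_add iC (contW2.intervalIntegrable 0 T)]
    apply intervalIntegral.integral_congr
    intro u hu
    rw [uIcc_of_le hT.le] at hu
    exact II_ftc1 hFz1 u (T - u) (by linarith [hu.2])
  have hneg : ∫ u in (0:ℝ)..T, ∫ z in (0:ℝ)..(T - u), II (pd 1 (Fz R P Q)) u z
      = -∫ u in (0:ℝ)..T, ∫ z in (0:ℝ)..(T - u), II (pd 0 (Fu R)) u z := by
    rw [← intervalIntegral.integral_neg]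
    apply intervalIntegral.integral_congr
    intro u _
    show (∫ z in (0:ℝ)..(T - u), II (pd 1 (Fz R P Q)) u z)
      = -∫ z in (0:ℝ)..(T - u), II (pd 0 (Fu R)) u z
    rw [← intervalIntegral.integral_neg]
    exact intervalIntegral.integral_congr fun z _ => hkey u z
  have htri : ∫ u in (0:ℝ)..T, ∫ z in (0:ℝ)..(T - u), II (pd 0 (Fu R)) u z
      = ∫ z in (0:ℝ)..T, ∫ u in (0:ℝ)..(T - z), II (pd 0 (Fu R)) u z :=
    (swap_tri (G := fun u z => II (pd 0 (Fu R)) u z)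
      (show Continuous fun q : ℝ × ℝ => II (pd 0 (Fu R)) q.1 q.2 from cont_II cpdFu0)
      hT.le).symm
  have mainid : ∫ z in (0:ℝ)..T, II (fun p => Fu R p + Fz R P Q p) (T - z) z
      = (∫ z in (0:ℝ)..T, II (Fu R) 0 z) + ∫ u in (0:ℝ)..T, II (Fz R P Q) u 0 := by
    have hsplit : ∫ z in (0:ℝ)..T, II (fun p => Fu R p + Fz R P Q p) (T - z) z
        = (∫ z in (0:ℝ)..T, II (Fu R) (T - z) z)
          + ∫ z in (0:ℝ)..T, II (Fz R P Q) (T - z) z := by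
      rw [← intervalIntegral.integral_add i1 i2]
      exact intervalIntegral.integral_congr fun z _ => II_add cFu cFz (T - z) z
    rw [hsplit, hFupart, hsub, hFzpart, hneg, htri]
    ring
  -- identification of literal integrals with II-form integrals
  have gLHS : (∫ z in (0:ℝ)..T, ∫ x in (0:ℝ)..1, ∫ y in (0:ℝ)..1,
      (2 * pd 2 R ![T - z, z, x, y] ^ 2 + 2 * pd 3 R ![T - z, z, x, y] ^ 2
        + pd 1 R ![T - z, z, x, y] ^ 2 + pd 2 P ![T - z, z, x, y] ^ 2
        + pd 2 Q ![T - z, z, x, y] ^ 2 + pd 3 P ![T - z, z, x, y] ^ 2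
        + pd 3 Q ![T - z, z, x, y] ^ 2))
      = ∫ z in (0:ℝ)..T, II (fun p => Fu R p + Fz R P Q p) (T - z) z := by
    apply intervalIntegral.integral_congr; intro z _
    show _ = ∫ x in (0:ℝ)..1, ∫ y in (0:ℝ)..1,
      (Fu R ![T - z, z, x, y] + Fz R P Q ![T - z, z, x, y])
    apply intervalIntegral.integral_congr; intro x _
    apply intervalIntegral.integral_congr; intro y _
    simp only [Fu, Fz]; ring
  have hA : (∫ z in (0:ℝ)..T, II (Fu R) 0 z)
      = 2 * ∫ z in (0:ℝ)..T, ∫ x in (0:ℝ)..1, ∫ y in (0:ℝ)..1,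
          (pd 2 R ![0, z, x, y] ^ 2 + pd 3 R ![0, z, x, y] ^ 2
            + pd 1 R ![0, z, x, y] ^ 2) := by
    have step : ∀ z : ℝ, II (Fu R) 0 z
        = 2 * II (fun p => pd 2 R p ^ 2 + pd 3 R p ^ 2 + pd 1 R p ^ 2) 0 z := by
      intro z
      calc II (Fu R) 0 z
          = II (fun p => 2 * (pd 2 R p ^ 2 + pd 3 R p ^ 2 + pd 1 R p ^ 2)) 0 z :=
            II_congr (fun p => by simp only [Fu]; ring) 0 z
        _ = _ := II_const_mul 2 0 z
    calc (∫ z in (0:ℝ)..T, II (Fu R) 0 z)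
        = ∫ z in (0:ℝ)..T,
            2 * II (fun p => pd 2 R p ^ 2 + pd 3 R p ^ 2 + pd 1 R p ^ 2) 0 z :=
          intervalIntegral.integral_congr fun z _ => step z
      _ = 2 * ∫ z in (0:ℝ)..T,
            II (fun p => pd 2 R p ^ 2 + pd 3 R p ^ 2 + pd 1 R p ^ 2) 0 z :=
          intervalIntegral.integral_const_mul 2 _
      _ = _ := rfl
  have hB : (∫ u in (0:ℝ)..T, II (Fz R P Q) u 0)
      = ∫ u in (0:ℝ)..T, ∫ x in (0:ℝ)..1, ∫ y in (0:ℝ)..1,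
          (-pd 1 R ![u, 0, x, y] ^ 2 + pd 2 P ![u, 0, x, y] ^ 2
            + pd 2 Q ![u, 0, x, y] ^ 2 + pd 3 P ![u, 0, x, y] ^ 2
            + pd 3 Q ![u, 0, x, y] ^ 2) := rfl
  constructor
  · rw [gLHS, mainid, hA, hB]
  -- part 2
  · have cg7 : Continuous fun p : V4 => pd 2 R p ^ 2 + pd 3 R p ^ 2
        + pd 1 R p ^ 2 + pd 2 P p ^ 2 + pd 2 Q p ^ 2 + pd 3 P p ^ 2 + pd 3 Q p ^ 2 := by
      have r1 := continuous_pd 1 hR1; have r2 := continuous_pd 2 hR1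
      have r3 := continuous_pd 3 hR1
      have p2 := continuous_pd 2 hP1; have p3 := continuous_pd 3 hP1
      have q2 := continuous_pd 2 hQ1; have q3 := continuous_pd 3 hQ1
      fun_prop
    have cS2 : Continuous fun p : V4 => pd 2 R p ^ 2 + pd 3 R p ^ 2 := by
      have r2 := continuous_pd 2 hR1; have r3 := continuous_pd 3 hR1
      fun_prop
    have cS4 : Continuous fun p : V4 => pd 2 P p ^ 2 + pd 2 Q p ^ 2
        + pd 3 P p ^ 2 + pd 3 Q p ^ 2 := by
      have p2 := continuous_pd 2 hP1; have p3 := continuous_pd 3 hP1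
      have q2 := continuous_pd 2 hQ1; have q3 := continuous_pd 3 hQ1
      fun_prop
    have cr1 : Continuous fun p : V4 => pd 1 R p ^ 2 := by
      have r1 := continuous_pd 1 hR1; fun_prop
    set g7 : V4 → ℝ := fun p => pd 2 R p ^ 2 + pd 3 R p ^ 2
        + pd 1 R p ^ 2 + pd 2 P p ^ 2 + pd 2 Q p ^ 2 + pd 3 P p ^ 2 + pd 3 Q p ^ 2 with hg7
    set S2 : V4 → ℝ := fun p => pd 2 R p ^ 2 + pd 3 R p ^ 2 with hS2
    set S4 : V4 → ℝ := fun p => pd 2 P p ^ 2 + pd 2 Q p ^ 2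
        + pd 3 P p ^ 2 + pd 3 Q p ^ 2 with hS4
    set r1sq : V4 → ℝ := fun p => pd 1 R p ^ 2 with hr1
    -- LHS2 in II form
    have hL2 : (∫ z in (0:ℝ)..T, ∫ x in (0:ℝ)..1, ∫ y in (0:ℝ)..1,
        (pd 2 R ![T - z, z, x, y] ^ 2 + pd 3 R ![T - z, z, x, y] ^ 2
          + pd 1 R ![T - z, z, x, y] ^ 2 + pd 2 P ![T - z, z, x, y] ^ 2
          + pd 2 Q ![T - z, z, x, y] ^ 2 + pd 3 P ![T - z, z, x, y] ^ 2
          + pd 3 Q ![T - z, z, x, y] ^ 2))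
        = ∫ z in (0:ℝ)..T, II g7 (T - z) z := rfl
    have iG7 : IntervalIntegrable (fun z => II g7 (T - z) z) volume 0 T :=
      ((cont_II cg7).comp (by fun_prop : Continuous fun z : ℝ => (T - z, z))
        ).intervalIntegrable 0 T
    have iS2 : IntervalIntegrable (fun z => II S2 (T - z) z) volume 0 T :=
      ((cont_II cS2).comp (by fun_prop : Continuous fun z : ℝ => (T - z, z))
        ).intervalIntegrable 0 T
    have split1 : ∫ z in (0:ℝ)..T, II (fun p => Fu R p + Fz R P Q p) (T - z) z
        = (∫ z in (0:ℝ)..T, II g7 (T - z) z) + ∫ z in (0:ℝ)..T, II S2 (T - z) z := by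
      rw [← intervalIntegral.integral_add iG7 iS2]
      apply intervalIntegral.integral_congr
      intro z _
      calc II (fun p => Fu R p + Fz R P Q p) (T - z) z
          = II (fun p => g7 p + S2 p) (T - z) z :=
            II_congr (fun p => by simp only [Fu, Fz, hg7, hS2]; ring) (T - z) z
        _ = II g7 (T - z) z + II S2 (T - z) z := II_add cg7 cS2 (T - z) z
    have iS4 : IntervalIntegrable (fun u => II S4 u 0) volume 0 T :=
      ((cont_II cS4).comp (by fun_prop : Continuous fun u : ℝ => (u, (0:ℝ)))
        ).intervalIntegrable 0 T
    have ir1 : IntervalIntegrable (fun u => II r1sq u 0) volume 0 T :=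
      ((cont_II cr1).comp (by fun_prop : Continuous fun u : ℝ => (u, (0:ℝ)))
        ).intervalIntegrable 0 T
    have split2 : ∫ u in (0:ℝ)..T, II (Fz R P Q) u 0
        = (∫ u in (0:ℝ)..T, II S4 u 0) - ∫ u in (0:ℝ)..T, II r1sq u 0 := by
      rw [← intervalIntegral.integral_sub iS4 ir1]
      apply intervalIntegral.integral_congr
      intro u _
      calc II (Fz R P Q) u 0
          = II (fun p => S4 p + -r1sq p) u 0 :=
            II_congr (fun p => by simp only [Fz, hS4, hr1]; ring) u 0
        _ = II S4 u 0 + II (fun p => -r1sq p) u 0 := II_add cS4 cr1.neg u 0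
        _ = II S4 u 0 - II r1sq u 0 := by rw [II_neg]; ring
    have n1 : 0 ≤ ∫ z in (0:ℝ)..T, II S2 (T - z) z :=
      intervalIntegral.integral_nonneg hT.le fun z _ =>
        II_nonneg (fun p => by simp only [hS2]; positivity) (T - z) z
    have n2 : 0 ≤ ∫ u in (0:ℝ)..T, II r1sq u 0 :=
      intervalIntegral.integral_nonneg hT.le fun u _ =>
        II_nonneg (fun p => by simp only [hr1]; positivity) u 0
    have n3 : 0 ≤ ∫ u in (0:ℝ)..T, II S4 u 0 :=
      intervalIntegral.integral_nonneg hT.le fun u _ =>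
        II_nonneg (fun p => by simp only [hS4]; positivity) u 0
    have hA' : (∫ z in (0:ℝ)..T, II (Fu R) 0 z)
        = 2 * ∫ z in (0:ℝ)..T, ∫ x in (0:ℝ)..1, ∫ y in (0:ℝ)..1,
            (pd 2 R ![0, z, x, y] ^ 2 + pd 3 R ![0, z, x, y] ^ 2
              + pd 1 R ![0, z, x, y] ^ 2) := hA
    have hB2 : (∫ u in (0:ℝ)..T, II S4 u 0)
        = ∫ u in (0:ℝ)..T, ∫ x in (0:ℝ)..1, ∫ y in (0:ℝ)..1,
            (pd 2 P ![u, 0, x, y] ^ 2 + pd 2 Q ![u, 0, x, y] ^ 2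
              + pd 3 P ![u, 0, x, y] ^ 2 + pd 3 Q ![u, 0, x, y] ^ 2) := rfl
    rw [hL2]
    have key := mainid
    rw [split1, split2] at key
    linarith [key, n1, n2, n3, hA', hB2]
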